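/- arXiv:1305.3570 — 6 statements merged into one kernel-verified Lean document; each statement's English description precedes it below -/
import Mathlib

section
/- For any simple graph G with m > 0 edges, Σ_{i∈V} d_i² ≤ m·q, where q is the largest eigenvalue of the signless Laplacian Q = D + A. -/
open Finset Matrix

lemma rayleigh_le {n : Type*} [Fintype n] [DecidableEq n] [Nonempty n]
    {M : Matrix n n ℝ} (hM : M.IsHermitian) (x : n → ℝ) :
    x ⬝ᵥ (M *ᵥ x) ≤ (⨆ i, hM.eigenvalues i) * (x ⬝ᵥ x) := by
  set U : Matrix n n ℝ := (hM.eigenvectorUnitary : Matrix n n ℝ) with hU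
  set y : n → ℝ := x ᵥ* U with hy
  have hUU : U * star U = 1 := (Matrix.mem_unitaryGroup_iff).mp hM.eigenvectorUnitary.2
  have hstar : (star U : Matrix n n ℝ) = Uᵀ := by
    ext i j; simp [Matrix.conjTranspose_apply]
  have hyy : y ⬝ᵥ y = x ⬝ᵥ x := by
    rw [hy, ← Matrix.mulVec_transpose, Matrix.dotProduct_mulVec, Matrix.mulVec_transpose,
      Matrix.vecMul_vecMul, ← hstar, hUU, Matrix.vecMul_one]
  have hquad : x ⬝ᵥ (M *ᵥ x) = ∑ i, hM.eigenvalues i * (y i) ^ 2 := by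
    conv_lhs => rw [hM.spectral_theorem, Unitary.conjStarAlgAut_apply]
    rw [← Matrix.mulVec_mulVec, Matrix.dotProduct_mulVec x, ← hU,
      ← Matrix.vecMul_vecMul, hstar, Matrix.mulVec_transpose, ← hy]
    simp only [Matrix.vecMul_diagonal, dotProduct, RCLike.ofReal_real_eq_id,
      Function.comp_apply, id_eq]
    exact Finset.sum_congr rfl fun i _ => by ring
  rw [hquad, ← hyy]
  have hbdd : BddAbove (Set.range hM.eigenvalues) := Set.Finite.bddAbove (Set.finite_range _)
  calc ∑ i, hM.eigenvalues i * (y i) ^ 2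
      ≤ ∑ i, (⨆ i, hM.eigenvalues i) * (y i) ^ 2 := by
        apply Finset.sum_le_sum
        intro i _
        exact mul_le_mul_of_nonneg_right (le_ciSup hbdd i) (sq_nonneg _)
    _ = (⨆ i, hM.eigenvalues i) * (y ⬝ᵥ y) := by
        rw [← Finset.mul_sum]; congr 1; simp [dotProduct, sq]

theorem sum_sq_degree_le_m_mul_q {V : Type*} [Fintype V] [DecidableEq V]
    (G : SimpleGraph V) [DecidableRel G.Adj]
    (m : ℕ) (hm : m = G.edgeFinset.card) (hm0 : 0 < m)
    (hQ : (Matrix.diagonal (fun v => (G.degree v : ℝ)) + G.adjMatrix ℝ).IsHermitian)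
    (q : ℝ) (hq : q = ⨆ i, hQ.eigenvalues i) :
    ∑ i, (G.degree i : ℝ) ^ 2 ≤ m * q := by
  classical
  set d : V → ℝ := fun v => (G.degree v : ℝ) with hd
  set A : Matrix V V ℝ := G.adjMatrix ℝ with hA
  set S : ℝ := ∑ i, d i ^ 2 with hS
  have hd' : ∀ x, ((G.degree x : ℝ)) = d x := fun x => rfl
  have hVne : Nonempty V := by
    rcases Finset.card_pos.mp (hm ▸ hm0) with ⟨e, he⟩
    exact ⟨e.out.1⟩
  -- row sums of A
  have hrow : ∀ i, ∑ j, A i j = d i := by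
    intro i
    rw [hA]
    simp only [SimpleGraph.adjMatrix_apply, Finset.sum_boole]
    rw [← SimpleGraph.neighborFinset_eq_filter, SimpleGraph.card_neighborFinset_eq_degree]
  have hsymm : ∀ i j, A i j = A j i := by
    intro i j; simp [hA, SimpleGraph.adjMatrix_apply, G.adj_comm]
  have hcol : ∀ j, ∑ i, A i j = d j := by
    intro j
    calc ∑ i, A i j = ∑ i, A j i := Finset.sum_congr rfl fun i _ => hsymm i j
    _ = d j := hrow j
  have hidem : ∀ i j, A i j * A i j = A i j := by
    intro i j; by_cases h : G.Adj i j <;> simp [hA, h]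
  -- handshake
  have hhs : ∑ i, d i = 2 * m := by
    have := SimpleGraph.sum_degrees_eq_twice_card_edges G
    rw [← hm] at this
    calc ∑ i, d i = ((∑ v, G.degree v : ℕ) : ℝ) := by push_cast [hd]; rfl
    _ = 2 * m := by rw [this]; push_cast; ring
  -- quadratic form value
  have hQd : d ⬝ᵥ ((Matrix.diagonal (fun v => (G.degree v : ℝ)) + A) *ᵥ d)
      = (∑ i, d i ^ 3) + ∑ i, ∑ j, A i j * (d i * d j) := by
    simp only [dotProduct, Matrix.mulVec, Matrix.add_apply, Matrix.diagonal_apply,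
      add_mul, Finset.sum_add_distrib, mul_add, hd']
    congr 1
    · refine Finset.sum_congr rfl fun i _ => ?_
      simp only [ite_mul, zero_mul, Finset.sum_ite_eq, Finset.mem_univ, if_true]
      ring
    · refine Finset.sum_congr rfl fun i _ => ?_
      rw [Finset.mul_sum]
      exact Finset.sum_congr rfl fun j _ => by ring
  -- Cauchy-Schwarz over ordered pairs
  have hCS := Finset.sum_mul_sq_le_sq_mul_sq (Finset.univ ×ˢ Finset.univ)
      (fun p : V × V => A p.1 p.2) (fun p : V × V => A p.1 p.2 * (d p.1 + d p.2))
  have e1 : ∑ p ∈ Finset.univ ×ˢ Finset.univ,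
      (A p.1 p.2) * (A p.1 p.2 * (d p.1 + d p.2)) = 2 * S := by
    rw [Finset.sum_product]
    calc ∑ i, ∑ j, A i j * (A i j * (d i + d j))
        = ∑ i, ∑ j, (A i j * d i + A i j * d j) := by
          refine Finset.sum_congr rfl fun i _ => Finset.sum_congr rfl fun j _ => ?_
          rw [← mul_assoc, hidem]; ring
      _ = (∑ i, ∑ j, A i j * d i) + ∑ i, ∑ j, A i j * d j := by
          simp [Finset.sum_add_distrib]
      _ = S + S := by
          congr 1
          · rw [hS]
            refine Finset.sum_congr rfl fun i _ => ?_
            rw [← Finset.sum_mul, hrow]; ring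
          · rw [Finset.sum_comm, hS]
            refine Finset.sum_congr rfl fun j _ => ?_
            rw [← Finset.sum_mul, hcol]; ring
      _ = 2 * S := by ring
  have e2 : ∑ p ∈ Finset.univ ×ˢ Finset.univ, (A p.1 p.2) ^ 2 = 2 * m := by
    rw [Finset.sum_product]
    calc ∑ i, ∑ j, A i j ^ 2 = ∑ i, ∑ j, A i j := by
          refine Finset.sum_congr rfl fun i _ => Finset.sum_congr rfl fun j _ => ?_
          rw [sq, hidem]
      _ = ∑ i, d i := Finset.sum_congr rfl fun i _ => hrow i
      _ = 2 * m := hhs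
  have e3 : ∑ p ∈ Finset.univ ×ˢ Finset.univ, (A p.1 p.2 * (d p.1 + d p.2)) ^ 2
      = 2 * ((∑ i, d i ^ 3) + ∑ i, ∑ j, A i j * (d i * d j)) := by
    rw [Finset.sum_product]
    calc ∑ i, ∑ j, (A i j * (d i + d j)) ^ 2
        = ∑ i, ∑ j, (A i j * d i ^ 2 + A i j * d j ^ 2 + 2 * (A i j * (d i * d j))) := by
          refine Finset.sum_congr rfl fun i _ => Finset.sum_congr rfl fun j _ => ?_
          rw [mul_pow, sq (A i j), hidem]; ring
      _ = ((∑ i, ∑ j, A i j * d i ^ 2) + ∑ i, ∑ j, A i j * d j ^ 2)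
            + 2 * ∑ i, ∑ j, A i j * (d i * d j) := by
          simp [Finset.sum_add_distrib, Finset.mul_sum]
      _ = ((∑ i, d i ^ 3) + ∑ i, d i ^ 3) + 2 * ∑ i, ∑ j, A i j * (d i * d j) := by
          congr 1
          congr 1
          · refine Finset.sum_congr rfl fun i _ => ?_
            rw [← Finset.sum_mul, hrow]; ring
          · rw [Finset.sum_comm]
            refine Finset.sum_congr rfl fun j _ => ?_
            rw [← Finset.sum_mul, hcol]; ring
      _ = 2 * ((∑ i, d i ^ 3) + ∑ i, ∑ j, A i j * (d i * d j)) := by ring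
  rw [e1, e2, e3, ← hQd] at hCS
  -- Rayleigh
  have hray := rayleigh_le hQ d
  rw [← hq] at hray
  have hdd : d ⬝ᵥ d = S := by
    rw [hS]; exact Finset.sum_congr rfl fun i _ => (sq (d i)).symm ▸ rfl
  rw [hdd] at hray
  -- positivity of S
  have hS0 : 0 < S := by
    have h1 : (0:ℝ) < ∑ i, d i := by rw [hhs]; positivity
    have h2 : ∃ i, 0 < d i := by
      by_contra h; push_neg at h
      exact absurd (Finset.sum_nonpos fun i _ => h i) (not_le.mpr h1)
    obtain ⟨i, hi⟩ := h2
    calc (0:ℝ) < d i ^ 2 := by positivity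
    _ ≤ S := Finset.single_le_sum (fun j _ => sq_nonneg (d j)) (Finset.mem_univ i)
  have hm' : (0:ℝ) < m := by exact_mod_cast hm0
  nlinarith [hCS, hray, hS0, hm']
end

section
/- For any simple graph G with n vertices and m > 0 edges, β(G)² ≥ ν(G), where β = μ·n/(2m) and μ is the largest adjacency eigenvalue; equivalently μ² ≥ (Σ_i d_i²)/n. -/
open Finset Matrix

lemma dot_expand {n : Type*} [Fintype n] [DecidableEq n] (b : n → n → ℝ)
    (hb : ∀ k l, (∑ i, b k i * b l i) = if k = l then (1:ℝ) else 0)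
    (a c : n → ℝ) :
    (fun i => ∑ k, a k * b k i) ⬝ᵥ (fun l => ∑ k, c k * b k l) = ∑ k, a k * c k := by
  simp only [dotProduct, Finset.sum_mul, Finset.mul_sum]
  rw [Finset.sum_comm]
  refine Finset.sum_congr rfl fun l _ => ?_
  rw [Finset.sum_comm]
  have : ∀ i, ∑ x, a i * b i x * (c l * b l x) = (a i * c l) * ∑ x, b i x * b l x := by
    intro i; rw [Finset.mul_sum]; exact Finset.sum_congr rfl fun x _ => by ring
  rw [Finset.sum_congr rfl fun i _ => this i]
  simp [hb, mul_ite]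

lemma quad_forms {n : Type*} [Fintype n] [DecidableEq n] (A : Matrix n n ℝ)
    (hA : A.IsHermitian) (x : n → ℝ) :
    ∃ y : n → ℝ, x ⬝ᵥ x = ∑ k, y k * y k ∧
      x ⬝ᵥ (A *ᵥ x) = ∑ k, hA.eigenvalues k * (y k * y k) ∧
      (A *ᵥ x) ⬝ᵥ (A *ᵥ x) = ∑ k, (hA.eigenvalues k)^2 * (y k * y k) := by
  set b : n → n → ℝ := fun k => ⇑(hA.eigenvectorBasis k) with hbdef
  set lam := hA.eigenvalues
  have horth : ∀ k l, (∑ i, b k i * b l i) = if k = l then (1:ℝ) else 0 := by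
    intro k l
    have := orthonormal_iff_ite.mp hA.eigenvectorBasis.orthonormal k l
    simp only [PiLp.inner_apply, RCLike.inner_apply, conj_trivial] at this
    rw [← this]; exact Finset.sum_congr rfl fun _ _ => mul_comm _ _
  set y : n → ℝ := fun k => ∑ j, b k j * x j with hydef
  have hx : x = fun i => ∑ k, y k * b k i := by
    have h := hA.eigenvectorBasis.sum_repr' (WithLp.toLp 2 x : EuclideanSpace ℝ n)
    funext i
    have := congrFun (congrArg (fun v : EuclideanSpace ℝ n => (v : n → ℝ)) h) i
    simp only [PiLp.inner_apply, RCLike.inner_apply, conj_trivial, WithLp.ofLp_toLp, WithLp.ofLp_sum] at this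
    rw [← this]
    rw [Finset.sum_apply]
    simp only [PiLp.smul_apply, smul_eq_mul]
    exact Finset.sum_congr rfl fun _ _ => congrArg (· * _) (Finset.sum_congr rfl fun _ _ => mul_comm _ _)
  have hAb : ∀ k, ∀ i, (∑ j, A i j * b k j) = lam k * b k i := by
    intro k i
    have := congrFun (hA.mulVec_eigenvectorBasis k) i
    simpa [Matrix.mulVec, dotProduct] using this
  have hAx : A *ᵥ x = fun i => ∑ k, (lam k * y k) * b k i := by
    funext i
    show ∑ j, A i j * x j = _
    conv_lhs => rw [hx]
    simp only
    calc ∑ j, A i j * ∑ k, y k * b k j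
        = ∑ k, y k * ∑ j, A i j * b k j := by
          simp_rw [Finset.mul_sum]
          rw [Finset.sum_comm]
          exact Finset.sum_congr rfl fun k _ => Finset.sum_congr rfl fun j _ => by ring
      _ = ∑ k, (lam k * y k) * b k i := by
          refine Finset.sum_congr rfl fun k _ => ?_
          rw [hAb k i]; ring
  refine ⟨y, ?_, ?_, ?_⟩
  · conv_lhs => rw [hx]
    exact dot_expand b horth y y
  · conv_lhs => rw [hAx]
    conv_lhs => rw [hx]
    rw [dot_expand b horth y (fun k => lam k * y k)]
    exact Finset.sum_congr rfl fun k _ => by ring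
  · conv_lhs => rw [hAx]
    rw [dot_expand b horth (fun k => lam k * y k) (fun k => lam k * y k)]
    exact Finset.sum_congr rfl fun k _ => by ring

lemma rayleigh_le_s4 {n : Type*} [Fintype n] [DecidableEq n] (A : Matrix n n ℝ)
    (hA : A.IsHermitian) (μ : ℝ) (h : ∀ k, hA.eigenvalues k ≤ μ) (x : n → ℝ) :
    x ⬝ᵥ (A *ᵥ x) ≤ μ * (x ⬝ᵥ x) := by
  obtain ⟨y, h1, h2, -⟩ := quad_forms A hA x
  rw [h1, h2, Finset.mul_sum]
  exact Finset.sum_le_sum fun k _ => mul_le_mul_of_nonneg_right (h k) (mul_self_nonneg _)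

lemma norm_sq_le {n : Type*} [Fintype n] [DecidableEq n] (A : Matrix n n ℝ)
    (hA : A.IsHermitian) (μ : ℝ) (h : ∀ k, |hA.eigenvalues k| ≤ μ) (x : n → ℝ) :
    (A *ᵥ x) ⬝ᵥ (A *ᵥ x) ≤ μ ^ 2 * (x ⬝ᵥ x) := by
  obtain ⟨y, h1, -, h3⟩ := quad_forms A hA x
  rw [h1, h3, Finset.mul_sum]
  refine Finset.sum_le_sum fun k _ => mul_le_mul_of_nonneg_right ?_ (mul_self_nonneg _)
  calc (hA.eigenvalues k) ^ 2 = |hA.eigenvalues k| ^ 2 := (sq_abs _).symm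
    _ ≤ μ ^ 2 := pow_le_pow_left₀ (abs_nonneg _) (h k) 2

lemma abs_eig_le {n : Type*} [Fintype n] [DecidableEq n] (A : Matrix n n ℝ)
    (hA : A.IsHermitian) (hnn : ∀ i j, 0 ≤ A i j) (μ : ℝ)
    (hray : ∀ x : n → ℝ, x ⬝ᵥ (A *ᵥ x) ≤ μ * (x ⬝ᵥ x)) (k : n) :
    |hA.eigenvalues k| ≤ μ := by
  set v : n → ℝ := ⇑(hA.eigenvectorBasis k) with hvdef
  have hv : v ⬝ᵥ v = 1 := by
    have := orthonormal_iff_ite.mp hA.eigenvectorBasis.orthonormal k k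
    rw [if_pos rfl] at this
    simp only [PiLp.inner_apply, RCLike.inner_apply, conj_trivial] at this
    exact this
  have hAv : A *ᵥ v = hA.eigenvalues k • v := hA.mulVec_eigenvectorBasis k
  have h1 : v ⬝ᵥ (A *ᵥ v) = hA.eigenvalues k := by
    rw [hAv, dotProduct_smul, smul_eq_mul, hv, mul_one]
  set w : n → ℝ := fun i => |v i| with hwdef
  have hw : w ⬝ᵥ w = 1 := by
    rw [← hv]; unfold w; simp [dotProduct, abs_mul_abs_self]
  have habs : |v ⬝ᵥ (A *ᵥ v)| ≤ w ⬝ᵥ (A *ᵥ w) := by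
    calc |v ⬝ᵥ (A *ᵥ v)| ≤ ∑ i, |v i * (A *ᵥ v) i| := Finset.abs_sum_le_sum_abs _ _
      _ ≤ ∑ i, w i * (A *ᵥ w) i := by
          refine Finset.sum_le_sum fun i _ => ?_
          rw [abs_mul]
          refine mul_le_mul_of_nonneg_left ?_ (abs_nonneg _)
          calc |(A *ᵥ v) i| ≤ ∑ j, |A i j * v j| := Finset.abs_sum_le_sum_abs _ _
            _ = ∑ j, A i j * w j := Finset.sum_congr rfl fun j _ => by
                rw [abs_mul, abs_of_nonneg (hnn i j)]
            _ = (A *ᵥ w) i := rfl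
      _ = w ⬝ᵥ (A *ᵥ w) := rfl
  calc |hA.eigenvalues k| = |v ⬝ᵥ (A *ᵥ v)| := by rw [h1]
    _ ≤ w ⬝ᵥ (A *ᵥ w) := habs
    _ ≤ μ * (w ⬝ᵥ w) := hray w
    _ = μ := by rw [hw, mul_one]

theorem beta_sq_ge_nu {V : Type*} [Fintype V] [DecidableEq V]
    (G : SimpleGraph V) [DecidableRel G.Adj]
    (n m : ℕ) (hn : n = Fintype.card V) (hm : m = G.edgeFinset.card) (hm0 : 0 < m)
    (hA : (G.adjMatrix ℝ).IsHermitian)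
    (μ : ℝ) (hμ : μ = ⨆ i, hA.eigenvalues i)
    (β ν : ℝ) (hβ : β = μ * n / (2 * m))
    (hν : ν = n * (∑ i, (G.degree i : ℝ) ^ 2) / (4 * m ^ 2)) :
    ν ≤ β ^ 2 ∧ (∑ i, (G.degree i : ℝ) ^ 2) / n ≤ μ ^ 2 := by
  have hV : Nonempty V := by
    obtain ⟨e, -⟩ := Finset.card_pos.mp (hm ▸ hm0)
    induction e using Sym2.ind with
    | _ a b => exact ⟨a⟩
  set A := G.adjMatrix ℝ with hAdef
  have hnn : ∀ i j, 0 ≤ A i j := by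
    intro i j
    rw [hAdef, SimpleGraph.adjMatrix_apply]
    split <;> norm_num
  have hle : ∀ k, hA.eigenvalues k ≤ μ := fun k => by
    rw [hμ]; exact le_ciSup (Set.Finite.bddAbove (Set.finite_range _)) k
  have hray := rayleigh_le_s4 A hA μ hle
  have habs := abs_eig_le A hA hnn μ hray
  have key := norm_sq_le A hA μ habs (Function.const V (1:ℝ))
  have hd : A *ᵥ Function.const V (1:ℝ) = fun v => (G.degree v : ℝ) := by
    funext v
    rw [hAdef, SimpleGraph.adjMatrix_mulVec_const_apply, mul_one]
  have hconst : (Function.const V (1:ℝ)) ⬝ᵥ (Function.const V (1:ℝ)) = (n:ℝ) := by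
    simp [dotProduct, hn]
  have hdeg : (fun v => (G.degree v : ℝ)) ⬝ᵥ (fun v => (G.degree v : ℝ))
      = ∑ i, (G.degree i : ℝ) ^ 2 := by
    simp [dotProduct, sq]
  rw [hd, hdeg, hconst] at key
  have hn0 : (0:ℝ) < n := by
    rw [hn]; exact_mod_cast Fintype.card_pos
  have hm0' : (0:ℝ) < m := by exact_mod_cast hm0
  constructor
  · rw [hβ, hν, div_pow]
    have hden : ((2:ℝ) * m) ^ 2 = 4 * m ^ 2 := by ring
    rw [hden]
    rw [div_le_div_iff_of_pos_right (by positivity)]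
    nlinarith [mul_le_mul_of_nonneg_left key (le_of_lt hn0)]
  · rw [div_le_iff₀ hn0]
    exact key
end

section
/- For any simple graph G, the largest adjacency eigenvalue μ satisfies μ ≥ (Σ_{ij∈E} √(d_i d_j))/m; consequently β(G) ≥ ε(G). -/
open Finset
open Matrix

-- Rayleigh bound for real symmetric matrices
lemma rayleigh_bound {n : Type*} [Fintype n] [DecidableEq n] [Nonempty n]
    {A : Matrix n n ℝ} (hA : A.IsHermitian) (x : n → ℝ) :
    x ⬝ᵥ (A *ᵥ x) ≤ (⨆ i, hA.eigenvalues i) * (x ⬝ᵥ x) := by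
  set U : Matrix n n ℝ := (Matrix.IsHermitian.eigenvectorUnitary hA : Matrix n n ℝ) with hU
  have hUu : U ∈ Matrix.unitaryGroup n ℝ := (Matrix.IsHermitian.eigenvectorUnitary hA).2
  set y : n → ℝ := x ᵥ* U with hy
  have hyx : (star U) *ᵥ x = y := by
    rw [Matrix.star_eq_conjTranspose, Matrix.conjTranspose_eq_transpose_of_trivial,
      Matrix.mulVec_transpose]
  have key : x ⬝ᵥ (A *ᵥ x) = ∑ i, hA.eigenvalues i * (y i)^2 := by
    conv_lhs => rw [hA.spectral_theorem, Unitary.conjStarAlgAut_apply]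
    rw [dotProduct_mulVec, ← Matrix.vecMul_vecMul, ← Matrix.vecMul_vecMul]
    rw [← dotProduct_mulVec, hyx]
    simp only [← hy, Matrix.vecMul_diagonal, dotProduct]
    apply Finset.sum_congr rfl
    intro i _
    simp [Function.comp]
    ring
  have hxx : x ⬝ᵥ x = ∑ i, (y i)^2 := by
    have : y ⬝ᵥ y = x ⬝ᵥ x := by
      nth_rewrite 2 [← hyx]
      rw [hy, ← dotProduct_mulVec, Matrix.mulVec_mulVec,
        (Matrix.mem_unitaryGroup_iff).mp hUu, Matrix.one_mulVec]
    rw [← this]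
    simp [dotProduct, sq]
  rw [key, hxx, Finset.mul_sum]
  apply Finset.sum_le_sum
  intro i _
  apply mul_le_mul_of_nonneg_right _ (sq_nonneg _)
  exact le_ciSup (Set.Finite.bddAbove (Set.finite_range _)) i

lemma sum_adj_eq_two_mul_sum_edges {V : Type*} [Fintype V] [DecidableEq V]
    (G : SimpleGraph V) [DecidableRel G.Adj] (f : V → V → ℝ) (hf : ∀ i j, f i j = f j i) :
    ∑ i, ∑ j, (if G.Adj i j then f i j else 0)
      = 2 * ∑ e ∈ G.edgeFinset, Sym2.lift ⟨f, hf⟩ e := by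
  have h1 : ∑ i, ∑ j, (if G.Adj i j then f i j else 0)
      = ∑ d : G.Dart, f d.fst d.snd := by
    rw [← Finset.sum_product']
    rw [Finset.sum_ite, Finset.sum_const_zero, add_zero]
    refine (Finset.sum_bij' (fun (d : G.Dart) _ => d.toProd)
      (fun p hp => (⟨p, (Finset.mem_filter.1 hp).2⟩ : G.Dart)) ?_ ?_ ?_ ?_ ?_).symm
    · intro d _
      simp [d.adj]
    · intro p hp
      exact Finset.mem_univ _
    · intro d _
      rfl
    · intro p hp
      rfl
    · intro d _
      rfl
  rw [h1]
  rw [← Finset.sum_fiberwise_of_maps_to (g := fun d : G.Dart => d.edge)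
    (fun d _ => (SimpleGraph.mem_edgeFinset).2 d.edge_mem)]
  rw [Finset.mul_sum]
  refine Finset.sum_congr rfl fun e he => ?_
  have hcongr : ∀ d ∈ Finset.univ.filter (fun d : G.Dart => d.edge = e),
      f d.fst d.snd = Sym2.lift ⟨f, hf⟩ e := by
    intro d hd
    have : d.edge = e := by simpa using hd
    rw [← this]
    rfl
  rw [Finset.sum_congr rfl hcongr, Finset.sum_const,
    G.dart_edge_fiber_card e ((SimpleGraph.mem_edgeFinset).1 he)]
  simp [two_mul]

theorem mu_ge_avg_sqrt_edge_deg {V : Type*} [Fintype V] [DecidableEq V]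
    (G : SimpleGraph V) [DecidableRel G.Adj]
    (n m : ℕ) (hn : n = Fintype.card V) (hm : m = G.edgeFinset.card) (hm0 : 0 < m)
    (hA : (G.adjMatrix ℝ).IsHermitian)
    (μ : ℝ) (hμ : μ = ⨆ i, hA.eigenvalues i)
    (β ε : ℝ) (hβ : β = μ * n / (2 * m))
    (hε : ε = n * (∑ e ∈ G.edgeFinset,
        Sym2.lift ⟨fun i j => Real.sqrt ((G.degree i : ℝ) * (G.degree j : ℝ)),
          fun i j => by simp [mul_comm]⟩ e) / (2 * m ^ 2)) :
    (∑ e ∈ G.edgeFinset,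
        Sym2.lift ⟨fun i j => Real.sqrt ((G.degree i : ℝ) * (G.degree j : ℝ)),
          fun i j => by simp [mul_comm]⟩ e) / m ≤ μ ∧ ε ≤ β := by
  classical
  set S : ℝ := ∑ e ∈ G.edgeFinset,
      Sym2.lift ⟨fun i j => Real.sqrt ((G.degree i : ℝ) * (G.degree j : ℝ)),
        fun i j => by simp [mul_comm]⟩ e with hS
  have hne : G.edgeFinset.Nonempty := Finset.card_pos.mp (hm ▸ hm0)
  obtain ⟨e0, -⟩ := hne
  have : Nonempty V := ⟨e0.out.1⟩
  set x : V → ℝ := fun i => Real.sqrt (G.degree i) with hx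
  have hxx : x ⬝ᵥ x = 2 * m := by
    have : ∀ i : V, x i * x i = (G.degree i : ℝ) := fun i =>
      Real.mul_self_sqrt (by positivity)
    simp only [dotProduct, this]
    rw [← Nat.cast_sum]
    rw [G.sum_degrees_eq_twice_card_edges, hm]
    push_cast; ring
  have hAxx : x ⬝ᵥ ((G.adjMatrix ℝ) *ᵥ x) = 2 * S := by
    rw [SimpleGraph.dotProduct_mulVec_adjMatrix, hS]
    rw [← sum_adj_eq_two_mul_sum_edges G _ (fun i j => by simp [mul_comm])]
    refine Finset.sum_congr rfl fun i _ => Finset.sum_congr rfl fun j _ => ?_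
    congr 1
    rw [hx, Real.sqrt_mul (by positivity)]
  have hray := rayleigh_bound hA x
  rw [hxx, hAxx, ← hμ] at hray
  have hmpos : (0 : ℝ) < m := by exact_mod_cast hm0
  have hSm : S ≤ μ * m := by nlinarith
  have h1 : S / m ≤ μ := by
    rw [div_le_iff₀ hmpos]; linarith [hSm]
  refine ⟨h1, ?_⟩
  rw [hβ, hε]
  have hn0 : (0 : ℝ) ≤ n := Nat.cast_nonneg n
  rw [div_le_div_iff₀ (by positivity) (by positivity)]
  nlinarith [mul_le_mul_of_nonneg_left hSm hn0, sq_nonneg (m : ℝ)]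
end

section
/- Let G be a graph on n vertices with m edges and no k-clique, and define θ by (θ-2)n/θ = (Σ_i d_i²)/m - n (equivalently 2m = (θ-1)n²/(θν)). Then for all h with 2 ≤ h, the number of (h+1)-cliques satisfies c_{h+1}/c_h ≥ (θ - h)n/(θ(h+1)) whenever c_h > 0; consequently θ ≤ k - 1. -/
open Finset

namespace MoonMoserAux

variable {V : Type*} [Fintype V] [DecidableEq V] (G : SimpleGraph V) [DecidableRel G.Adj]

/-- number of (h+1)-cliques containing `S` -/
def D (h : ℕ) (S : Finset V) : ℕ :=
  ((G.cliqueFinset (h + 1)).filter (fun K => S ⊆ K)).card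

lemma erase_mem {h : ℕ} {K : Finset V} (hK : K ∈ G.cliqueFinset (h + 1)) {x : V} (hx : x ∈ K) :
    K.erase x ∈ G.cliqueFinset h := by
  rw [SimpleGraph.mem_cliqueFinset_iff] at hK ⊢
  refine ⟨hK.1.subset (Finset.coe_subset.2 (erase_subset x K)), ?_⟩
  rw [card_erase_of_mem hx, hK.2]
  omega

lemma D_eq_card_ext {h : ℕ} {S : Finset V} (hS : S ∈ G.cliqueFinset h) :
    D G h S = (Finset.univ.filter (fun u => insert u S ∈ G.cliqueFinset (h + 1))).card := by
  rw [SimpleGraph.mem_cliqueFinset_iff] at hS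
  refine (Finset.card_bij (fun u _ => insert u S) ?_ ?_ ?_).symm
  · intro u hu
    simp only [mem_filter, mem_univ, true_and] at hu ⊢
    exact ⟨hu, subset_insert _ _⟩
  · intro u hu v hv huv
    simp only [mem_filter, mem_univ, true_and, SimpleGraph.mem_cliqueFinset_iff] at hu hv
    have huv' : insert u S = insert v S := huv
    have hu' : u ∉ S := by
      intro hmem
      rw [Finset.insert_eq_self.2 hmem] at hu
      have h1 := hu.2; have h2 := hS.2; omega
    have hmem : u ∈ insert v S := by rw [← huv']; exact mem_insert_self u S
    rcases mem_insert.1 hmem with h1 | h1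
    · exact h1
    · exact absurd h1 hu'
  · intro K hK
    simp only [mem_filter, SimpleGraph.mem_cliqueFinset_iff] at hK
    obtain ⟨u, huK, huS⟩ : ∃ u ∈ K, u ∉ S := by
      by_contra hcontra
      have hsub : K ⊆ S := by
        intro a haK
        by_contra haS
        exact hcontra ⟨a, haK, haS⟩
      have h1 := Finset.card_le_card hsub
      have h2 := hK.1.2; have h3 := hS.2; omega
    have hsub : insert u S ⊆ K := insert_subset huK hK.2
    have hcard : (insert u S).card = h + 1 := by
      rw [card_insert_of_notMem huS, hS.2]
    have heq : insert u S = K :=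
      Finset.eq_of_subset_of_card_le hsub (by rw [hK.1.2, hcard])
    refine ⟨u, ?_, heq⟩
    simp only [mem_filter, mem_univ, true_and, SimpleGraph.mem_cliqueFinset_iff]
    rw [heq]
    exact hK.1

lemma insert_mem_iff {h : ℕ} {S : Finset V} (hS : S ∈ G.cliqueFinset h) (u : V) :
    insert u S ∈ G.cliqueFinset (h + 1) ↔ u ∉ S ∧ ∀ y ∈ S, G.Adj u y := by
  rw [SimpleGraph.mem_cliqueFinset_iff] at hS ⊢
  constructor
  · intro hK
    have hu : u ∉ S := by
      intro hmem
      rw [Finset.insert_eq_self.2 hmem] at hK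
      have h1 := hK.2; have h2 := hS.2; omega
    refine ⟨hu, fun y hy => ?_⟩
    have hne : u ≠ y := fun he => hu (he ▸ hy)
    exact hK.1 (by simp) (by simp [hy]) hne
  · rintro ⟨hu, hadj⟩
    exact hS.insert hadj

lemma filter_subset_eq {h : ℕ} {K : Finset V} (hK : K ∈ G.cliqueFinset (h + 1)) :
    (G.cliqueFinset h).filter (fun S => S ⊆ K) = Finset.powersetCard h K := by
  rw [SimpleGraph.mem_cliqueFinset_iff] at hK
  ext S
  simp only [mem_filter, mem_powersetCard, SimpleGraph.mem_cliqueFinset_iff]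
  constructor
  · rintro ⟨hS, hSK⟩; exact ⟨hSK, hS.2⟩
  · rintro ⟨hSK, hcard⟩
    exact ⟨⟨hK.1.subset (Finset.coe_subset.2 hSK), hcard⟩, hSK⟩

lemma sum_D (h : ℕ) :
    ∑ S ∈ G.cliqueFinset h, D G h S = (h + 1) * (G.cliqueFinset (h + 1)).card := by
  unfold D
  simp_rw [Finset.card_filter]
  rw [Finset.sum_comm]
  have hcongr : ∀ K ∈ G.cliqueFinset (h + 1),
      (∑ S ∈ G.cliqueFinset h, if S ⊆ K then 1 else 0) = h + 1 := by
    intro K hK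
    rw [← Finset.card_filter, filter_subset_eq G hK, Finset.card_powersetCard,
      (SimpleGraph.mem_cliqueFinset_iff.1 hK).2]
    exact Nat.choose_succ_self_right h
  rw [Finset.sum_congr rfl hcongr, Finset.sum_const, smul_eq_mul, mul_comm]

lemma image_erase {h : ℕ} {K : Finset V} (hcard : K.card = h + 1) :
    K.image (fun x => K.erase x) = Finset.powersetCard h K := by
  ext S
  simp only [mem_image, mem_powersetCard]
  constructor
  · rintro ⟨x, hx, rfl⟩
    exact ⟨erase_subset _ _, by rw [card_erase_of_mem hx, hcard]; omega⟩
  · rintro ⟨hSK, hS⟩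
    obtain ⟨x, hxK, hxS⟩ : ∃ x ∈ K, x ∉ S := by
      by_contra hcontra
      have hsub : K ⊆ S := by
        intro a haK
        by_contra haS
        exact hcontra ⟨a, haK, haS⟩
      have := Finset.card_le_card hsub; omega
    refine ⟨x, hxK, ?_⟩
    refine (Finset.eq_of_subset_of_card_le ?_ ?_).symm
    · intro y hy; exact mem_erase.2 ⟨fun he => hxS (he ▸ hy), hSK hy⟩
    · rw [card_erase_of_mem hxK, hcard, hS]
      omega

lemma sum_erase_eq {h : ℕ} {K : Finset V} (hK : K ∈ G.cliqueFinset (h + 1))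
    (f : Finset V → ℕ) :
    ∑ x ∈ K, f (K.erase x) = ∑ S ∈ (G.cliqueFinset h).filter (fun S => S ⊆ K), f S := by
  rw [filter_subset_eq G hK,
    ← image_erase (SimpleGraph.mem_cliqueFinset_iff.1 hK).2, Finset.sum_image]
  intro x hx y hy hxy
  by_contra hne
  have hmem : y ∈ K.erase x := mem_erase.2 ⟨fun he => hne he.symm, hy⟩
  rw [show K.erase x = K.erase y from hxy] at hmem
  exact (mem_erase.1 hmem).1 rfl

lemma sum_sum_erase (h : ℕ) :
    ∑ K ∈ G.cliqueFinset (h + 1), ∑ x ∈ K, D G h (K.erase x)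
      = ∑ S ∈ G.cliqueFinset h, (D G h S) ^ 2 := by
  have hcongr : ∀ K ∈ G.cliqueFinset (h + 1), ∑ x ∈ K, D G h (K.erase x)
      = ∑ S ∈ G.cliqueFinset h, if S ⊆ K then D G h S else 0 := by
    intro K hK
    rw [sum_erase_eq G hK, Finset.sum_filter]
  rw [Finset.sum_congr rfl hcongr, Finset.sum_comm]
  refine Finset.sum_congr rfl fun S hS => ?_
  rw [← Finset.sum_filter, Finset.sum_const, smul_eq_mul]
  show ((G.cliqueFinset (h + 1)).filter (fun K => S ⊆ K)).card * D G h S = (D G h S) ^ 2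
  rw [sq]; rfl

lemma key_bound {h : ℕ} {K : Finset V} (hK : K ∈ G.cliqueFinset (h + 1)) :
    ∑ x ∈ K, D G h (K.erase x) ≤ Fintype.card V + h * D G (h + 1) K := by
  have hKcard := (SimpleGraph.mem_cliqueFinset_iff.1 hK).2
  have step1 : ∑ x ∈ K, D G h (K.erase x)
      = ∑ x ∈ K, (univ.filter (fun u => insert u (K.erase x) ∈ G.cliqueFinset (h + 1))).card :=
    Finset.sum_congr rfl fun x hx => D_eq_card_ext G (erase_mem G hK hx)
  rw [step1]
  simp_rw [Finset.card_filter]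
  rw [Finset.sum_comm]
  have key : ∀ u : V,
      (∑ x ∈ K, if insert u (K.erase x) ∈ G.cliqueFinset (h + 1) then 1 else 0)
      ≤ 1 + h * (if insert u K ∈ G.cliqueFinset (h + 1 + 1) then 1 else 0) := by
    intro u
    rw [← Finset.card_filter]
    by_cases hins : insert u K ∈ G.cliqueFinset (h + 1 + 1)
    · simp only [hins, if_true, mul_one]
      calc (K.filter _).card ≤ K.card := Finset.card_filter_le _ _
        _ = 1 + h := by omega
    · simp only [hins, if_false, mul_zero]
      refine Finset.card_le_one.2 ?_
      intro a ha b hb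
      by_contra hab
      simp only [mem_filter] at ha hb
      apply hins
      have hadj : ∀ y ∈ K, G.Adj u y := by
        intro y hy
        rcases ne_or_eq y a with hne | rfl
        · have hmem : y ∈ K.erase a := mem_erase.2 ⟨hne, hy⟩
          exact ((insert_mem_iff G (erase_mem G hK ha.1) u).1 ha.2).2 y hmem
        · have hmem : y ∈ K.erase b := mem_erase.2 ⟨hab, hy⟩
          exact ((insert_mem_iff G (erase_mem G hK hb.1) u).1 hb.2).2 y hmem
      rw [SimpleGraph.mem_cliqueFinset_iff]
      exact (SimpleGraph.mem_cliqueFinset_iff.1 hK).insert hadj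
  calc ∑ u : V, (∑ x ∈ K, if insert u (K.erase x) ∈ G.cliqueFinset (h + 1) then 1 else 0)
      ≤ ∑ u : V, (1 + h * (if insert u K ∈ G.cliqueFinset (h + 1 + 1) then 1 else 0)) :=
        Finset.sum_le_sum fun u _ => key u
    _ = Fintype.card V + h * D G (h + 1) K := by
        rw [Finset.sum_add_distrib, Finset.sum_const, ← Finset.mul_sum, ← Finset.card_filter,
          ← D_eq_card_ext G hK, smul_eq_mul, mul_one, Finset.card_univ]

lemma sumsq_bound (h : ℕ) :
    ∑ S ∈ G.cliqueFinset h, (D G h S) ^ 2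
      ≤ Fintype.card V * (G.cliqueFinset (h + 1)).card
        + h * ((h + 1 + 1) * (G.cliqueFinset (h + 1 + 1)).card) := by
  rw [← sum_sum_erase G h]
  calc ∑ K ∈ G.cliqueFinset (h + 1), ∑ x ∈ K, D G h (K.erase x)
      ≤ ∑ K ∈ G.cliqueFinset (h + 1), (Fintype.card V + h * D G (h + 1) K) :=
        Finset.sum_le_sum fun K hK => key_bound G hK
    _ = _ := by
        rw [Finset.sum_add_distrib, Finset.sum_const, ← Finset.mul_sum, sum_D G (h + 1),
          smul_eq_mul]
        ring

lemma masterN (h : ℕ) :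
    ((h + 1) * (G.cliqueFinset (h + 1)).card) ^ 2
      ≤ (G.cliqueFinset h).card *
        (Fintype.card V * (G.cliqueFinset (h + 1)).card
          + h * ((h + 1 + 1) * (G.cliqueFinset (h + 1 + 1)).card)) := by
  have cs : ((∑ S ∈ G.cliqueFinset h, D G h S : ℕ) : ℕ) ^ 2
      ≤ ((G.cliqueFinset h).card : ℕ) * ∑ S ∈ G.cliqueFinset h, (D G h S) ^ 2 := by
    have hcs := sq_sum_le_card_mul_sum_sq (s := G.cliqueFinset h) (f := fun S => (D G h S : ℕ))
    simpa using hcs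
  rw [sum_D G h] at cs
  exact le_trans cs (Nat.mul_le_mul_left _ (sumsq_bound G h))

lemma isNClique_singleton (v : V) : G.IsNClique 1 {v} := by
  constructor
  · simp [SimpleGraph.IsClique, Set.Pairwise]
  · simp

lemma D_one (v : V) : D G 1 {v} = G.degree v := by
  have hsingle : ({v} : Finset V) ∈ G.cliqueFinset 1 :=
    SimpleGraph.mem_cliqueFinset_iff.2 (isNClique_singleton G v)
  rw [D_eq_card_ext G hsingle]
  have hset : (univ.filter (fun u => insert u ({v} : Finset V) ∈ G.cliqueFinset (1 + 1)))
      = G.neighborFinset v := by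
    ext u
    simp only [mem_filter, mem_univ, true_and, SimpleGraph.mem_neighborFinset]
    rw [insert_mem_iff G hsingle u]
    constructor
    · rintro ⟨hu, hadj⟩
      exact (hadj v (mem_singleton_self v)).symm
    · intro hadj
      refine ⟨?_, fun y hy => ?_⟩
      · simp only [mem_singleton]
        exact fun he => G.ne_of_adj hadj (he.symm)
      · rw [mem_singleton.1 hy]
        exact hadj.symm
  rw [hset]
  rfl

lemma cliqueFinset_one_eq : G.cliqueFinset 1 = univ.image (fun v => ({v} : Finset V)) := by
  ext S
  simp only [SimpleGraph.mem_cliqueFinset_iff, mem_image, mem_univ, true_and]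
  constructor
  · intro hS
    obtain ⟨a, rfl⟩ := Finset.card_eq_one.1 hS.2
    exact ⟨a, rfl⟩
  · rintro ⟨a, rfl⟩
    exact isNClique_singleton G a

lemma sum_D_one_sq : ∑ S ∈ G.cliqueFinset 1, (D G 1 S) ^ 2 = ∑ v, (G.degree v) ^ 2 := by
  rw [cliqueFinset_one_eq, Finset.sum_image (fun x _ y _ hxy => Finset.singleton_injective hxy)]
  exact Finset.sum_congr rfl fun v _ => by rw [D_one]

lemma sum_D_one : ∑ S ∈ G.cliqueFinset 1, D G 1 S = ∑ v, G.degree v := by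
  rw [cliqueFinset_one_eq, Finset.sum_image (fun x _ y _ hxy => Finset.singleton_injective hxy)]
  exact Finset.sum_congr rfl fun v _ => by rw [D_one]

lemma card_two : (G.cliqueFinset 2).card = G.edgeFinset.card := by
  have h1 := sum_D G 1
  rw [sum_D_one, SimpleGraph.sum_degrees_eq_twice_card_edges] at h1
  have h2 : (G.cliqueFinset (1 + 1)).card = (G.cliqueFinset 2).card := by norm_num
  omega

lemma c_pos_of_succ {h : ℕ} (hpos : 0 < (G.cliqueFinset (h + 1)).card) :
    0 < (G.cliqueFinset h).card := by
  obtain ⟨K, hK⟩ := Finset.card_pos.1 hpos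
  have hKcard := (SimpleGraph.mem_cliqueFinset_iff.1 hK).2
  obtain ⟨x, hx⟩ := Finset.card_pos.1 (show 0 < K.card by omega)
  exact Finset.card_pos.2 ⟨K.erase x, erase_mem G hK hx⟩

end MoonMoserAux

open MoonMoserAux

set_option maxHeartbeats 1000000 in
theorem moon_moser_theta {V : Type*} [Fintype V] [DecidableEq V]
    (G : SimpleGraph V) [DecidableRel G.Adj]
    (n m k : ℕ) (hn : n = Fintype.card V) (hm : m = G.edgeFinset.card) (hm0 : 0 < m)
    (hfree : G.CliqueFree k)
    (c : ℕ → ℕ) (hc : ∀ h, c h = (G.cliqueFinset h).card)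
    (θ : ℝ) (hθ0 : θ ≠ 0)
    (hθ : (θ - 2) * n / θ = (∑ i, (G.degree i : ℝ) ^ 2) / m - n) :
    (∀ h : ℕ, 2 ≤ h → 0 < c h →
      (θ - h) * n / (θ * (h + 1)) ≤ (c (h + 1) : ℝ) / (c h)) ∧ θ ≤ (k : ℝ) - 1 := by
  have hm' : (0 : ℝ) < m := by exact_mod_cast hm0
  have hn0 : 0 < n := by
    by_contra h0
    have hcard0 : Fintype.card V = 0 := by omega
    have hemp : IsEmpty V := Fintype.card_eq_zero_iff.mp hcard0
    have h2m : ∑ v, G.degree v = 2 * m := by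
      rw [hm]; exact G.sum_degrees_eq_twice_card_edges
    rw [Finset.univ_eq_empty, Finset.sum_empty] at h2m
    omega
  have hn' : (0 : ℝ) < n := by exact_mod_cast hn0
  have hsumdeg : ∑ v, G.degree v = 2 * m := by
    rw [hm]; exact G.sum_degrees_eq_twice_card_edges
  have hc2 : c 2 = m := by rw [hc, hm]; exact card_two G
  set S2 : ℝ := ∑ i, (G.degree i : ℝ) ^ 2 with hS2def
  have hS2nat : S2 = ((∑ v, (G.degree v) ^ 2 : ℕ) : ℝ) := by
    rw [hS2def]; push_cast; rfl
  have hdegN : ∑ v, (G.degree v) ^ 2 ≤ (n - 1) * (2 * m) := by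
    calc ∑ v, (G.degree v) ^ 2 ≤ ∑ v, (n - 1) * G.degree v := by
          refine Finset.sum_le_sum fun v _ => ?_
          have hlt := G.degree_lt_card_verts v
          rw [← hn] at hlt
          rw [sq]
          exact Nat.mul_le_mul_right _ (by omega)
      _ = (n - 1) * (2 * m) := by rw [← Finset.mul_sum, hsumdeg]
  have hS2lt : S2 < 2 * n * m := by
    rw [hS2nat]
    have h1 : ((∑ v, (G.degree v) ^ 2 : ℕ) : ℝ) ≤ ((n : ℝ) - 1) * (2 * m) := by
      have hcast : (((n - 1) * (2 * m) : ℕ) : ℝ) = ((n : ℝ) - 1) * (2 * m) := by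
        push_cast [Nat.cast_sub hn0]
        ring
      calc ((∑ v, (G.degree v) ^ 2 : ℕ) : ℝ) ≤ (((n - 1) * (2 * m) : ℕ) : ℝ) := by
            exact_mod_cast hdegN
        _ = _ := hcast
    nlinarith [hm']
  have hθ' : (θ - 2) * n * m = S2 * θ - n * m * θ := by
    have h1 := hθ
    field_simp at h1
    linarith [h1]
  have hθpos : 0 < θ := by
    by_contra hcontra
    push_neg at hcontra
    nlinarith [mul_nonneg (neg_nonneg.2 hcontra) (sub_pos.2 hS2lt).le, hm', hn',
      mul_pos hn' hm']
  have masterR : ∀ h : ℕ, (((h : ℝ) + 1) * (c (h + 1) : ℝ)) ^ 2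
      ≤ (c h : ℝ) * ((n : ℝ) * (c (h + 1)) + (h : ℝ) * ((h : ℝ) + 2) * (c (h + 1 + 1))) := by
    intro h
    have hN := masterN G h
    simp only [← hc, ← hn] at hN
    have hNR := (Nat.cast_le (α := ℝ)).2 hN
    push_cast at hNR
    nlinarith [hNR]
  have base3 : S2 ≤ (n : ℝ) * m + 3 * (c 3 : ℝ) := by
    have hb := sumsq_bound G 1
    rw [sum_D_one_sq, ← hn, card_two, ← hm] at hb
    have hb' : ∑ v, (G.degree v) ^ 2 ≤ n * m + 3 * c 3 := by
      have hcc : (G.cliqueFinset (1 + 1 + 1)).card = c 3 := (hc 3).symm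
      rw [hcc] at hb
      linarith [hb]
    rw [hS2nat]
    exact_mod_cast hb'
  have part1 : ∀ h : ℕ, 2 ≤ h → 0 < c h →
      (θ - h) * n / (θ * (h + 1)) ≤ (c (h + 1) : ℝ) / (c h) := by
    intro h hh
    induction h, hh using Nat.le_induction with
    | base =>
      intro _
      rw [hc2]
      have h3 : (c (2 + 1) : ℝ) = (c 3 : ℝ) := by norm_num
      rw [h3]
      push_cast
      rw [div_le_div_iff₀ (by positivity) hm']
      nlinarith [mul_le_mul_of_nonneg_right base3 hθpos.le, hθ']
    | succ h hh ih =>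
      intro hpos1
      have hpos0 : 0 < c h := by
        rw [hc]
        apply c_pos_of_succ G
        rw [← hc]
        exact hpos1
      have hr := ih hpos0
      have ha : (0 : ℝ) < (c h : ℝ) := by exact_mod_cast hpos0
      have hb : (0 : ℝ) < (c (h + 1) : ℝ) := by exact_mod_cast hpos1
      have hh' : (2 : ℝ) ≤ (h : ℝ) := by exact_mod_cast hh
      rw [div_le_div_iff₀ (by positivity) ha] at hr
      push_cast
      rw [div_le_div_iff₀ (by positivity) hb]
      have hmaster := masterR h
      have H1 : ((θ - h) * n * (c h)) * (((h : ℝ) + 1) * (c (h + 1)))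
          ≤ ((c (h + 1) : ℝ) * (θ * ((h : ℝ) + 1))) * (((h : ℝ) + 1) * (c (h + 1))) := by
        apply mul_le_mul_of_nonneg_right
        · push_cast at hr
          exact hr
        · positivity
      have H2 : θ * ((((h : ℝ) + 1) * (c (h + 1) : ℝ)) ^ 2)
          ≤ θ * ((c h : ℝ) * ((n : ℝ) * (c (h + 1))
            + (h : ℝ) * ((h : ℝ) + 2) * (c (h + 1 + 1)))) :=
        mul_le_mul_of_nonneg_left hmaster hθpos.le
      have hha : (0 : ℝ) < (h : ℝ) * (c h) := by positivity
      rw [← mul_le_mul_iff_of_pos_right hha]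
      linarith [H1, H2]
  refine ⟨part1, ?_⟩
  by_contra hcontra
  push_neg at hcontra
  have hk3 : 3 ≤ k := by
    by_contra hk
    push_neg at hk
    have h2 : G.CliqueFree 2 := hfree.mono (by omega)
    obtain ⟨e, he⟩ := Finset.card_pos.1 (show 0 < G.edgeFinset.card by omega)
    have hex : ∃ a b : V, G.Adj a b := by
      revert he
      refine Sym2.ind (fun a b he => ?_) e
      rw [SimpleGraph.mem_edgeFinset, SimpleGraph.mem_edgeSet] at he
      exact ⟨a, b, he⟩
    obtain ⟨a, b, hab⟩ := hex
    refine h2 {a, b} ⟨?_, ?_⟩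
    · intro x hx y hy hxy
      simp only [Finset.coe_insert, Set.mem_insert_iff, Finset.coe_singleton,
        Set.mem_singleton_iff] at hx hy
      rcases hx with rfl | rfl <;> rcases hy with rfl | rfl
      · exact absurd rfl hxy
      · exact hab
      · exact hab.symm
      · exact absurd rfl hxy
    · exact Finset.card_pair (G.ne_of_adj hab)
  have claim : ∀ j : ℕ, 2 ≤ j → j ≤ k → 0 < c j := by
    intro j hj
    induction j, hj using Nat.le_induction with
    | base =>
      intro _
      rw [hc2]
      exact hm0
    | succ j hj ih =>
      intro hjk
      have hcj := ih (by omega)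
      have hineq := part1 j hj hcj
      have hjk' : (j : ℝ) ≤ (k : ℝ) - 1 := by
        have hcast : ((j : ℝ) + 1) ≤ (k : ℝ) := by exact_mod_cast hjk
        linarith
      have hnum : 0 < (θ - j) * n / (θ * (j + 1)) := by
        apply div_pos
        · apply mul_pos _ hn'
          linarith [hcontra]
        · positivity
      have hq : (0 : ℝ) < (c (j + 1) : ℝ) / (c j) := lt_of_lt_of_le hnum hineq
      by_contra h0
      push_neg at h0
      have h00 : c (j + 1) = 0 := by omega
      rw [h00] at hq
      norm_num at hq
  have hck : c k = 0 := by
    rw [hc, SimpleGraph.cliqueFinset_eq_empty_iff.2 hfree]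
    simp
  have hcp := claim k (by omega) le_rfl
  omega
end

section
/- For any connected graph G with n vertices, m edges and radius r, one has n/(2ν) ≥ m/(n - r), where ν = n(Σ_i d_i²)/(4m²). Consequently H(G) ≥ m/(n-r). -/
open Finset

private lemma exists_dist_pred {V : Type*} {G : SimpleGraph V} (hconn : G.Connected)
    (u : V) (k : ℕ) (h : ∃ x, G.dist u x = k + 1) : ∃ y, G.dist u y = k := by
  obtain ⟨x, hx⟩ := h
  obtain ⟨p, hp⟩ := (hconn u x).exists_walk_length_eq_dist
  have hq : ∃ q : G.Walk x u, q.length = k + 1 :=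
    ⟨p.reverse, by rw [SimpleGraph.Walk.length_reverse, hp, hx]⟩
  obtain ⟨q, hq⟩ := hq
  cases q with
  | nil => simp at hq
  | @cons _ y _ h q' =>
      refine ⟨y, ?_⟩
      have h1 : G.dist u y ≤ k := by
        have := SimpleGraph.dist_le q'.reverse
        rwa [SimpleGraph.Walk.length_reverse, show q'.length = k by simpa using hq] at this
      have h2 : G.dist y x = 1 := SimpleGraph.dist_eq_one_iff_adj.mpr h.symm
      have h3 : G.dist u x ≤ G.dist u y + G.dist y x := hconn.dist_triangle
      rw [hx, h2] at h3
      omega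

private lemma deg_add_ecc_le {V : Type*} [Fintype V] (G : SimpleGraph V) [DecidableRel G.Adj]
    (hconn : G.Connected) (i : V) :
    G.degree i + (⨆ j, G.dist i j) ≤ Fintype.card V := by
  classical
  set e := ⨆ j, G.dist i j with he
  rcases Nat.eq_zero_or_pos e with h0 | hpos
  · rw [h0]
    simpa using (G.degree_lt_card_verts i).le
  · have : Nonempty V := ⟨i⟩
    have hbdd : BddAbove (Set.range fun j => G.dist i j) :=
      (Set.finite_range _).bddAbove
    have hw : ∃ w, G.dist i w = e := by
      obtain ⟨w, hw⟩ := Finite.exists_max fun j => G.dist i j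
      exact ⟨w, le_antisymm (le_ciSup hbdd w) (ciSup_le hw)⟩
    have hatt : ∀ k ≤ e, ∃ x, G.dist i x = k := by
      intro k hk
      obtain ⟨d, hd⟩ := Nat.exists_eq_add_of_le hk
      clear hk
      induction d generalizing k with
      | zero =>
          obtain ⟨w, hw'⟩ := hw
          exact ⟨w, by omega⟩
      | succ d ih =>
          exact exists_dist_pred hconn i k (ih (k + 1) (by omega))
    have hatt' : ∀ k : ℕ, ∃ x, (k ≤ e → G.dist i x = k) := by
      intro k
      by_cases hk : k ≤ e
      · obtain ⟨x, hx⟩ := hatt k hk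
        exact ⟨x, fun _ => hx⟩
      · exact ⟨i, fun h => absurd h hk⟩
    choose f hf using hatt'
    set A : Finset V := insert i (G.neighborFinset i) with hA
    set B : Finset V := (Finset.Icc 2 e).image f with hB
    have hAcard : A.card = G.degree i + 1 := by
      rw [hA, Finset.card_insert_of_notMem (G.notMem_neighborFinset_self i),
        G.card_neighborFinset_eq_degree]
    have hBcard : B.card = e - 1 := by
      rw [hB, Finset.card_image_of_injOn, Nat.card_Icc]
      · omega
      · intro a ha b hb hab
        simp only [Finset.coe_Icc, Set.mem_Icc] at ha hb
        have h1 := hf a ha.2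
        have h2 := hf b hb.2
        rw [hab] at h1
        omega
    have hdisj : Disjoint A B := by
      rw [Finset.disjoint_right]
      intro x hxB hxA
      obtain ⟨k, hk, rfl⟩ := Finset.mem_image.mp hxB
      rw [Finset.mem_Icc] at hk
      have hd := hf k hk.2
      rcases Finset.mem_insert.mp hxA with h1 | h2
      · rw [← h1, SimpleGraph.dist_self] at hd
        omega
      · have hadj : G.Adj i (f k) := by
          rwa [SimpleGraph.mem_neighborFinset] at h2
        have : G.dist i (f k) = 1 := SimpleGraph.dist_eq_one_iff_adj.mpr hadj
        omega
    have hcard : A.card + B.card ≤ Fintype.card V := by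
      rw [← Finset.card_union_of_disjoint hdisj]
      exact Finset.card_le_univ _
    omega

theorem radius_bound {V : Type*} [Fintype V] (G : SimpleGraph V) [DecidableRel G.Adj]
    (hconn : G.Connected)
    (n m r : ℕ) (hn : n = Fintype.card V) (hm : m = G.edgeFinset.card) (hm0 : 0 < m)
    (hr : r = ⨅ i, ⨆ j, G.dist i j)
    (ν H : ℝ) (hν : ν = n * (∑ i, (G.degree i : ℝ) ^ 2) / (4 * m ^ 2))
    (hH : H = ∑ e ∈ G.edgeFinset,
        Sym2.lift ⟨fun i j => 2 / ((G.degree i : ℝ) + (G.degree j : ℝ)),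
          fun i j => by simp [add_comm]⟩ e) :
    (m : ℝ) / (n - r) ≤ n / (2 * ν) ∧ (m : ℝ) / (n - r) ≤ H := by
  classical
  have hne : Nonempty V := hconn.nonempty
  -- r ≤ eccentricity of every vertex
  have hrle : ∀ i : V, r ≤ ⨆ j, G.dist i j := by
    intro i
    rw [hr]
    exact ciInf_le (OrderBot.bddBelow _) i
  -- degree + r ≤ n
  have hkey : ∀ i : V, G.degree i + r ≤ n := by
    intro i
    have := deg_add_ecc_le G hconn i
    have := hrle i
    omega
  -- a vertex of positive degree
  have hex : ∃ a : V, 0 < G.degree a := by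
    obtain ⟨e, he⟩ := Finset.card_pos.mp (hm ▸ hm0)
    induction e using Sym2.inductionOn with
    | _ a b =>
        rw [SimpleGraph.mem_edgeFinset, SimpleGraph.mem_edgeSet] at he
        exact ⟨a, (G.degree_pos_iff_exists_adj a).mpr ⟨b, he⟩⟩
  have hrn : r < n := by
    obtain ⟨a, ha⟩ := hex
    have := hkey a
    omega
  have hD : (0 : ℝ) < (n : ℝ) - r := by
    have : (r : ℝ) < n := by exact_mod_cast hrn
    linarith
  have hdegD : ∀ i : V, (G.degree i : ℝ) ≤ (n : ℝ) - r := by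
    intro i
    have := hkey i
    have : (G.degree i : ℝ) + r ≤ n := by exact_mod_cast this
    linarith
  have hm0' : (0 : ℝ) < m := by exact_mod_cast hm0
  have hsum : ∑ i : V, (G.degree i : ℝ) = 2 * m := by
    rw [hm]
    exact_mod_cast G.sum_degrees_eq_twice_card_edges
  -- S = sum of squared degrees
  set S : ℝ := ∑ i : V, (G.degree i : ℝ) ^ 2 with hS
  have hSle : S ≤ 2 * m * ((n : ℝ) - r) := by
    calc S ≤ ∑ i : V, (G.degree i : ℝ) * ((n : ℝ) - r) := by
              apply Finset.sum_le_sum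
              intro i _
              rw [sq]
              exact mul_le_mul_of_nonneg_left (hdegD i) (by positivity)
      _ = (∑ i : V, (G.degree i : ℝ)) * ((n : ℝ) - r) := by rw [← Finset.sum_mul]
      _ = 2 * m * ((n : ℝ) - r) := by rw [hsum]
  have hSpos : 0 < S := by
    by_contra hcon
    push_neg at hcon
    have hall : ∀ i ∈ (Finset.univ : Finset V), (G.degree i : ℝ) ^ 2 = 0 := by
      have := (Finset.sum_eq_zero_iff_of_nonneg
        (fun i _ => by positivity : ∀ i ∈ (Finset.univ : Finset V),
          (0:ℝ) ≤ (G.degree i : ℝ) ^ 2)).mp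
        (le_antisymm hcon (by positivity))
      exact this
    obtain ⟨a, ha⟩ := hex
    have := hall a (Finset.mem_univ a)
    have : (G.degree a : ℝ) = 0 := by
      nlinarith
    simp at this
    omega
  have hn0 : (0 : ℝ) < n := by
    have : 0 < Fintype.card V := Fintype.card_pos
    rw [hn]; exact_mod_cast this
  constructor
  · -- first inequality
    have hnu : (n : ℝ) / (2 * ν) = 2 * m ^ 2 / S := by
      rw [hν]
      field_simp
      ring
    rw [hnu, div_le_div_iff₀ hD hSpos]
    nlinarith [mul_le_mul_of_nonneg_left hSle hm0'.le]
  · -- second inequality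
    have hterm : ∀ e ∈ G.edgeFinset,
        1 / ((n : ℝ) - r) ≤ Sym2.lift ⟨fun i j => 2 / ((G.degree i : ℝ) + (G.degree j : ℝ)),
          fun i j => by simp [add_comm]⟩ e := by
      intro e
      induction e using Sym2.inductionOn with
      | _ a b =>
          intro he
          rw [SimpleGraph.mem_edgeFinset, SimpleGraph.mem_edgeSet] at he
          rw [Sym2.lift_mk]
          have hda : 0 < G.degree a := (G.degree_pos_iff_exists_adj a).mpr ⟨b, he⟩
          have hdb : 0 < G.degree b := (G.degree_pos_iff_exists_adj b).mpr ⟨a, he.symm⟩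
          have hpos : (0 : ℝ) < (G.degree a : ℝ) + (G.degree b : ℝ) := by
            have : (0:ℝ) < (G.degree a : ℝ) := by exact_mod_cast hda
            have : (0:ℝ) ≤ (G.degree b : ℝ) := by positivity
            linarith
          have hle : (G.degree a : ℝ) + (G.degree b : ℝ) ≤ 2 * ((n : ℝ) - r) := by
            have h1 := hdegD a
            have h2 := hdegD b
            linarith
          calc 1 / ((n : ℝ) - r) = 2 / (2 * ((n : ℝ) - r)) := by
                rw [div_eq_div_iff hD.ne' (by positivity)]; ring
            _ ≤ 2 / ((G.degree a : ℝ) + (G.degree b : ℝ)) :=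
                div_le_div_of_nonneg_left (by norm_num) hpos hle
    have := Finset.card_nsmul_le_sum G.edgeFinset _ _ hterm
    rw [nsmul_eq_mul, ← hm] at this
    rw [hH]
    calc (m : ℝ) / ((n : ℝ) - r) = m * (1 / ((n : ℝ) - r)) := by ring
      _ ≤ _ := this
end

section
/- For any simple graph G with n vertices, m > 0 edges, maximum degree Δ, minimum degree δ and average degree d = 2m/n, the irregularity ν = n(Σ_i d_i²)/(4m²) satisfies ν ≤ 1 + ((Δ - δ)/(2d))². -/
open Finset

theorem nu_upper_popoviciu {V : Type*} [Fintype V] (G : SimpleGraph V) [DecidableRel G.Adj]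
    (n m : ℕ) (hn : n = Fintype.card V) (hm : m = G.edgeFinset.card) (hm0 : 0 < m)
    (Δ δ : ℕ) (hΔ : Δ = G.maxDegree) (hδ : δ = G.minDegree)
    (d : ℝ) (hd : d = 2 * m / n)
    (ν : ℝ) (hν : ν = n * (∑ i, (G.degree i : ℝ) ^ 2) / (4 * m ^ 2)) :
    ν ≤ 1 + (((Δ : ℝ) - δ) / (2 * d)) ^ 2 := by
  have hsum : ∑ v, G.degree v = 2 * m := by
    rw [hm]; exact G.sum_degrees_eq_twice_card_edges
  have hn0 : 0 < n := by
    rcases Nat.eq_zero_or_pos n with h0 | h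
    · exfalso
      have : IsEmpty V := by
        rw [h0] at hn
        exact Fintype.card_eq_zero_iff.mp hn.symm
      simp at hsum
      omega
    · exact h
  have hsumR : ∑ v, (G.degree v : ℝ) = 2 * m := by
    exact_mod_cast hsum
  have hkey : ∑ v, (G.degree v : ℝ) ^ 2 ≤ ((Δ : ℝ) + δ) * (2 * m) - n * (Δ * δ) := by
    have h1 : ∑ v, (G.degree v : ℝ) ^ 2 ≤
        ∑ v, (((Δ : ℝ) + δ) * (G.degree v : ℝ) - Δ * δ) := by
      apply Finset.sum_le_sum
      intro i _
      have hmin : (δ : ℝ) ≤ G.degree i := by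
        exact_mod_cast hδ ▸ G.minDegree_le_degree i
      have hmax : (G.degree i : ℝ) ≤ Δ := by
        exact_mod_cast hΔ ▸ G.degree_le_maxDegree i
      nlinarith [mul_nonneg (sub_nonneg.mpr hmax) (sub_nonneg.mpr hmin)]
    calc ∑ v, (G.degree v : ℝ) ^ 2 ≤ _ := h1
      _ = ((Δ : ℝ) + δ) * (2 * m) - n * (Δ * δ) := by
          rw [Finset.sum_sub_distrib, ← Finset.mul_sum, hsumR, Finset.sum_const,
            Finset.card_univ, ← hn]
          push_cast; ring
  have hnR : (0 : ℝ) < n := by exact_mod_cast hn0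
  have hmR : (0 : ℝ) < m := by exact_mod_cast hm0
  have final : (n : ℝ) * ∑ v, (G.degree v : ℝ) ^ 2 ≤
      4 * m ^ 2 + n ^ 2 * ((Δ : ℝ) - δ) ^ 2 / 4 := by
    nlinarith [mul_le_mul_of_nonneg_left hkey hnR.le,
      sq_nonneg ((n : ℝ) * (Δ + δ) / 2 - 2 * m)]
  rw [hν, hd, div_le_iff₀ (by positivity : (0:ℝ) < 4 * m ^ 2)]
  have hrhs : (1 + (((Δ : ℝ) - δ) / (2 * (2 * m / n))) ^ 2) * (4 * m ^ 2) =
      4 * m ^ 2 + n ^ 2 * ((Δ : ℝ) - δ) ^ 2 / 4 := by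
    field_simp
    ring
  rw [hrhs]; exact final
end
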